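/- For all natural numbers n and k, C_n ≡ binom(2n+1, n) (mod 2), where C_n is the n-th Catalan number. -/
import Mathlib

lemma key (n : ℕ) : Nat.choose (2 * n + 1) n = (2 * n + 1) * catalan n := by
  have h1 : (2 * n + 1) * Nat.choose (2 * n) n = Nat.choose (2 * n + 1) (n + 1) * (n + 1) :=
    Nat.add_one_mul_choose_eq (2 * n) n
  have h2 : Nat.choose (2 * n + 1) (n + 1) = Nat.choose (2 * n + 1) n := by
    exact Nat.choose_symm_half n
  have h3 : (n + 1) * catalan n = Nat.choose (2 * n) n :=
    succ_mul_catalan_eq_centralBinom n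
  have : (n + 1) * ((2 * n + 1) * catalan n) = (n + 1) * Nat.choose (2 * n + 1) n := by
    rw [h2] at h1
    nlinarith [h1, h3]
  exact (Nat.eq_of_mul_eq_mul_left (by omega) this).symm

/-- `C n ≡ (2n+1 choose n) (mod 2)` where `C n = (2n choose n)/(n+1)` is the Catalan number. -/
theorem catalan_mod_two (n : ℕ) :
    Nat.choose (2 * n) n / (n + 1) % 2 = Nat.choose (2 * n + 1) n % 2 := by
  have hc : Nat.choose (2 * n) n / (n + 1) = catalan n := by
    rw [catalan_eq_centralBinom_div, Nat.centralBinom]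
  rw [hc, key, Nat.mul_mod, Nat.mul_add_mod]
  simp [Nat.mod_mod_of_dvd]
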